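/- Let S_1 and S_2 be numerical semigroups, at least one of which is not symmetric. Then for any coprime x ∈ S_2 not a minimal generator of S_2 and y ∈ S_1 not a minimal generator of S_1, the gluing ⟨xS_1, yS_2⟩ is not nearly Gorenstein. -/

import Mathlib

/-- A numerical semigroup: a subset of ℕ containing 0, closed under addition,
with finite complement. -/
def IsNumSgp (S : Set ℕ) : Prop :=
  0 ∈ S ∧ (∀ a ∈ S, ∀ b ∈ S, a + b ∈ S) ∧ (Sᶜ : Set ℕ).Finite

/-- An integer belongs to (the image in ℤ of) S. -/
def memZ (S : Set ℕ) (z : ℤ) : Prop := ∃ s ∈ S, (s : ℤ) = z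

/-- F is the Frobenius number of S: the largest natural number not in S. -/
def IsFrob (S : Set ℕ) (F : ℕ) : Prop := F ∉ S ∧ ∀ n, F < n → n ∈ S

/-- The set of pseudo-Frobenius numbers of S. -/
def PF (S : Set ℕ) : Set ℕ := {f | f ∉ S ∧ ∀ s ∈ S, s ≠ 0 → f + s ∈ S}

/-- n is a minimal generator of S. -/
def IsMinGen (S : Set ℕ) (n : ℕ) : Prop :=
  n ∈ S ∧ n ≠ 0 ∧ ¬∃ a ∈ S, ∃ b ∈ S, a ≠ 0 ∧ b ≠ 0 ∧ a + b = n

/-- S is almost symmetric (Nari): F - f ∈ PF(S) for every f ∈ PF(S). -/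
def AlmostSym (S : Set ℕ) (F : ℕ) : Prop :=
  ∀ f ∈ PF S, ∃ g ∈ PF S, (g : ℤ) = (F : ℤ) - (f : ℤ)

/-- S is symmetric: PF(S) = {F(S)} (vacuously true when S = ℕ). -/
def IsSym (S : Set ℕ) : Prop := ∀ F, IsFrob S F → PF S = {F}

/-- (f_1,...,f_ν) is an NG-vector for S with minimal generators n_1,...,n_ν. -/
def IsNGVector {ν : ℕ} (S : Set ℕ) (n f : Fin ν → ℕ) : Prop :=
  ∀ i, f i ∈ PF S ∧ ∀ g ∈ PF S, memZ S ((n i : ℤ) + (f i : ℤ) - (g : ℤ))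

/-- S is nearly Gorenstein (generator criterion): for each minimal generator m
there is f ∈ PF(S) with m + f - g ∈ S for all g ∈ PF(S). -/
def NearlyGGen (S : Set ℕ) : Prop :=
  ∀ m, IsMinGen S m → ∃ f ∈ PF S, ∀ g ∈ PF S, memZ S ((m : ℤ) + (f : ℤ) - (g : ℤ))

/-- The canonical ideal K(S) = {z ∈ ℤ : F - z ∉ S}. -/
def Kan (S : Set ℕ) (F : ℕ) : Set ℤ := {z | ¬ memZ S ((F : ℤ) - z)}

/-- The relative ideal (S - K(S)) = {z ∈ ℤ : z + K(S) ⊆ S}. -/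
def SmK (S : Set ℕ) (F : ℕ) : Set ℤ := {z | ∀ k ∈ Kan S F, memZ S (z + k)}

/-- S is nearly Gorenstein: M(S) ⊆ K(S) + (S - K(S)). -/
def NearlyG (S : Set ℕ) (F : ℕ) : Prop :=
  ∀ m ∈ S, m ≠ 0 → ∃ k ∈ Kan S F, ∃ x ∈ SmK S F, k + x = (m : ℤ)

lemma memZ_natCast {S : Set ℕ} {n : ℕ} (h : n ∈ S) : memZ S n := ⟨n, h, rfl⟩

lemma natCast_memZ {S : Set ℕ} {n : ℕ} (h : memZ S n) : n ∈ S := by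
  obtain ⟨s, hs, he⟩ := h
  have : s = n := by exact_mod_cast he
  exact this ▸ hs

lemma memZ_nonneg {S : Set ℕ} {z : ℤ} (h : memZ S z) : 0 ≤ z := by
  obtain ⟨s, _, he⟩ := h; exact he ▸ Int.natCast_nonneg s

lemma memZ_add {S : Set ℕ} (hS : IsNumSgp S) {a b : ℤ} (ha : memZ S a) (hb : memZ S b) :
    memZ S (a + b) := by
  obtain ⟨s, hs, rfl⟩ := ha; obtain ⟨t, ht, rfl⟩ := hb
  exact ⟨s + t, hS.2.1 s hs t ht, by push_cast; ring⟩

lemma memZ_smul {S : Set ℕ} (hS : IsNumSgp S) {a : ℤ} (ha : memZ S a) {t : ℤ} (ht : 0 ≤ t) :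
    memZ S (t * a) := by
  lift t to ℕ using ht
  induction t with
  | zero => exact ⟨0, hS.1, by simp⟩
  | succ n ih =>
    have := memZ_add hS ih ha
    refine this.imp fun s hs => ⟨hs.1, by push_cast at hs ⊢; linarith [hs.2]⟩

lemma glue_memZ {S1 S2 : Set ℕ} {x y : ℕ} {u v : ℤ}
    (hu : memZ S1 u) (hv : memZ S2 v) :
    memZ {m : ℕ | ∃ a ∈ S1, ∃ b ∈ S2, x * a + y * b = m} ((x:ℤ) * u + (y:ℤ) * v) := by
  obtain ⟨s, hs, rfl⟩ := hu; obtain ⟨t, ht, rfl⟩ := hv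
  exact ⟨x * s + y * t, ⟨s, hs, t, ht, rfl⟩, by push_cast; ring⟩

lemma glue_rep {S1 S2 : Set ℕ} {x y : ℕ} (hcop : Nat.Coprime x y) (hy0 : y ≠ 0)
    {u v : ℤ}
    (h : memZ {m : ℕ | ∃ a ∈ S1, ∃ b ∈ S2, x * a + y * b = m} ((x:ℤ) * u + (y:ℤ) * v)) :
    ∃ t : ℤ, memZ S1 (u - y * t) ∧ memZ S2 (v + x * t) := by
  obtain ⟨n, hn, he⟩ := h
  obtain ⟨a, ha, b, hb, hab⟩ := hn
  have heq : (x:ℤ) * a + (y:ℤ) * b = (x:ℤ) * u + (y:ℤ) * v := by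
    rw [← he]; push_cast [← hab]; ring
  have hco : IsCoprime (y:ℤ) (x:ℤ) := by
    rw [Int.isCoprime_iff_gcd_eq_one]
    simpa [Nat.gcd_comm] using hcop
  have hdvd : (y:ℤ) ∣ (u - a) := by
    have : (y:ℤ) ∣ (u - (a:ℤ)) * (x:ℤ) := ⟨b - v, by linarith⟩
    exact hco.dvd_of_dvd_mul_left (by rwa [mul_comm (u - (a:ℤ)) (x:ℤ)] at this)
  obtain ⟨t, ht⟩ := hdvd
  refine ⟨t, ⟨a, ha, by linarith⟩, ⟨b, hb, ?_⟩⟩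
  have hy' : (y:ℤ) ≠ 0 := by exact_mod_cast hy0
  have : (y:ℤ) * ((b:ℤ) - (v + x * t)) = 0 := by
    have : (x:ℤ) * (u - a) = (y:ℤ) * (b - v) := by linarith
    rw [ht] at this
    ring_nf
    ring_nf at this
    linarith
  have := mul_eq_zero.mp this
  rcases this with h' | h'
  · exact absurd h' hy'
  · linarith

/-- every numerical semigroup has an "integer Frobenius". -/
lemma exists_intFrob {S : Set ℕ} (hS : IsNumSgp S) :
    ∃ q0 : ℤ, ¬ memZ S q0 ∧ ∀ z : ℤ, q0 < z → memZ S z := by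
  by_cases hc : (Sᶜ : Set ℕ).Nonempty
  · obtain ⟨F, hF, hmax⟩ := Set.Finite.exists_maximalFor id _ hS.2.2 hc
    refine ⟨(F : ℤ), fun h => hF (natCast_memZ h), fun z hz => ?_⟩
    have hz0 : 0 ≤ z := le_trans (Int.natCast_nonneg F) (le_of_lt hz)
    refine ⟨z.toNat, ?_, by omega⟩
    by_contra hmem
    have := hmax (j := z.toNat) hmem (by simp only [id]; omega)
    simp only [id] at this
    omega
  · refine ⟨-1, fun h => by have := memZ_nonneg h; omega, fun z hz => ?_⟩
    have hz0 : 0 ≤ z := by omega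
    have : z.toNat ∈ S := by
      by_contra h; exact hc ⟨z.toNat, h⟩
    exact ⟨z.toNat, this, by omega⟩

lemma exists_ne_zero {S : Set ℕ} (hS : IsNumSgp S) : ∃ n ∈ S, n ≠ 0 := by
  by_contra h
  push_neg at h
  have : {n : ℕ | n ≠ 0} ⊆ Sᶜ := fun n hn hnS => hn (h n hnS)
  have hinf : {n : ℕ | n ≠ 0}.Infinite := by
    have : {n : ℕ | n ≠ 0} = (Set.Iio 1)ᶜ := by ext n; simp [Nat.lt_one_iff]
    rw [this]
    exact (Set.finite_Iio 1).infinite_compl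
  exact hinf (hS.2.2.subset this)

open scoped Classical in
/-- least nonzero element; it is a minimal generator. -/
lemma exists_mult {S : Set ℕ} (hS : IsNumSgp S) :
    ∃ m, (m ∈ S ∧ m ≠ 0) ∧ (∀ k, k ∈ S → k ≠ 0 → m ≤ k) ∧ IsMinGen S m := by
  obtain ⟨n, hn, hn0⟩ := exists_ne_zero hS
  have hex : ∃ k, k ∈ S ∧ k ≠ 0 := ⟨n, hn, hn0⟩
  classical
  set m := Nat.find hex with hmdef
  have hm := Nat.find_spec hex
  have hmin := fun k hk => Nat.find_min hex (m := k) hk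
  have hle : ∀ k, k ∈ S → k ≠ 0 → m ≤ k := by
    intro k hk hk0
    by_contra h
    exact hmin k (by omega) ⟨hk, hk0⟩
  refine ⟨m, hm, hle, hm.1, hm.2, ?_⟩
  rintro ⟨a, ha, b, hb, ha0, hb0, hab⟩
  have := hle a ha ha0
  have := hle b hb hb0
  omega

lemma frob_mem_PF {S : Set ℕ} {F : ℕ} (hF : IsFrob S F) : F ∈ PF S :=
  ⟨hF.1, fun s _ hs0 => hF.2 _ (by omega)⟩

lemma not_sym {S : Set ℕ} (h : ¬ IsSym S) :
    ∃ F, IsFrob S F ∧ ∃ f ∈ PF S, f ≠ F := by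
  rw [IsSym] at h
  push_neg at h
  obtain ⟨F, hF, hne⟩ := h
  refine ⟨F, hF, ?_⟩
  by_contra hc
  push_neg at hc
  apply hne
  ext f
  simp only [Set.mem_singleton_iff]
  exact ⟨fun hf => hc f hf, fun hf => hf ▸ frob_mem_PF hF⟩

lemma decomp {S1 S2 : Set ℕ} {x y : ℕ} (hS1 : IsNumSgp S1) (hS2 : IsNumSgp S2)
    (hcop : Nat.Coprime x y) (hx1 : 1 ≤ x) (hy1 : 1 ≤ y) (hxS : x ∈ S2) (hyS : y ∈ S1)
    {F1 : ℕ} (hF1 : IsFrob S1 F1)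
    {f : ℕ} (hf : f ∈ PF {m : ℕ | ∃ a ∈ S1, ∃ b ∈ S2, x * a + y * b = m}) :
    ∃ (p : ℕ) (q : ℤ), p ∈ PF S1 ∧ ¬ memZ S2 q ∧
      (∀ s ∈ S2, s ≠ 0 → memZ S2 (q + s)) ∧
      (∀ k : ℤ, 1 ≤ k → memZ S2 (q + x * k)) ∧ (-1 ≤ q) ∧
      (f : ℤ) = x * p + y * q + x * y := by
  classical
  have hy0 : y ≠ 0 := by omega
  have hx' : (1:ℤ) ≤ x := by exact_mod_cast hx1
  have hy' : (1:ℤ) ≤ y := by exact_mod_cast hy1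
  obtain ⟨q0, hq0n, hq0m⟩ := exists_intFrob hS2
  -- Bezout representation of f
  obtain ⟨u0, v0, huv⟩ : ∃ u v : ℤ, (x:ℤ) * u + y * v = (f:ℤ) := by
    have h1 : ((Nat.gcd x y : ℕ) : ℤ) = x * Nat.gcdA x y + y * Nat.gcdB x y :=
      Nat.gcd_eq_gcd_ab x y
    rw [Nat.Coprime.gcd_eq_one hcop] at h1
    exact ⟨f * Nat.gcdA x y, f * Nat.gcdB x y, by push_cast at h1 ⊢; nlinarith [h1]⟩
  set P : ℕ → Prop := fun k => ¬ memZ S2 (q0 - k) ∧ ∃ u : ℤ, (x:ℤ) * u + y * (q0 - k) = f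
    with hP
  have hPex : ∃ k, P k := by
    set j : ℤ := ((v0.natAbs + q0.natAbs + 1 : ℕ) : ℤ) with hjdef
    have hj0 : (0:ℤ) ≤ j := by positivity
    have hxj : j ≤ (x:ℤ) * j := le_mul_of_one_le_left hj0 hx'
    have hjlb : (v0.natAbs + q0.natAbs + 1 : ℤ) ≤ (x:ℤ) * j := by
      refine le_trans ?_ hxj
      simp only [hjdef]
      push_cast
      omega
    have h1 : v0 - (x:ℤ) * j ≤ -1 := by omega
    have h2 : v0 - (x:ℤ) * j ≤ q0 := by omega
    obtain ⟨k, hk⟩ : ∃ k : ℕ, (q0 - (k:ℤ)) = v0 - (x:ℤ) * j :=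
      ⟨(q0 - (v0 - (x:ℤ) * j)).toNat, by omega⟩
    refine ⟨k, ?_, ⟨u0 + y * j, ?_⟩⟩
    · rw [hk]
      intro h
      have := memZ_nonneg h
      omega
    · rw [hk]; linear_combination huv
  set K := Nat.find hPex with hK
  have hqA : P K := Nat.find_spec hPex
  set q : ℤ := q0 - (K:ℤ) with hqdef
  have hqn : ¬ memZ S2 q := hqA.1
  have hqmax : ∀ v : ℤ, q < v → (∃ u : ℤ, (x:ℤ) * u + y * v = f) → memZ S2 v := by
    intro v hv hsolv
    by_contra hnm
    have hvq0 : v ≤ q0 := by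
      by_contra h
      exact hnm (hq0m v (by omega))
    have hPk : P (q0 - v).toNat := by
      constructor
      · rw [show (q0 - ((q0 - v).toNat : ℤ)) = v by omega]; exact hnm
      · obtain ⟨u, hu⟩ := hsolv
        exact ⟨u, by rw [show (q0 - ((q0 - v).toNat : ℤ)) = v by omega]; exact hu⟩
    exact Nat.find_min hPex (show (q0 - v).toNat < K by omega) hPk
  have hstar : ∀ k : ℤ, 1 ≤ k → memZ S2 (q + x * k) := by
    intro k hk
    obtain ⟨u, hu⟩ := hqA.2
    refine hqmax _ (by nlinarith) ⟨u - y * k, by linear_combination hu⟩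
  obtain ⟨u, hu⟩ := hqA.2
  set pz : ℤ := u - y with hpz
  have hfz : (f:ℤ) = x * pz + y * q + x * y := by linear_combination -hu
  -- pz is not (the image of an element) in S1
  have hpnm : ¬ memZ S1 pz := by
    intro hp
    have h2 : memZ S2 (q + x) := by simpa using hstar 1 le_rfl
    have h3 := glue_memZ (S1 := S1) (S2 := S2) (x := x) (y := y) hp h2
    have h4 : memZ {m : ℕ | ∃ a ∈ S1, ∃ b ∈ S2, x * a + y * b = m} (f:ℤ) := by
      rw [show ((f:ℕ):ℤ) = (x:ℤ) * pz + (y:ℤ) * (q + x) by linear_combination hfz]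
      exact h3
    exact hf.1 (natCast_memZ h4)
  -- pz has the pseudo-Frobenius property for S1
  have hpPF : ∀ s : ℕ, s ∈ S1 → s ≠ 0 → memZ S1 (pz + s) := by
    intro s hs hs0
    have hxs : x * s ∈ {m : ℕ | ∃ a ∈ S1, ∃ b ∈ S2, x * a + y * b = m} :=
      ⟨s, hs, 0, hS2.1, by ring⟩
    have hfs := hf.2 _ hxs (by positivity)
    have hmz : memZ {m : ℕ | ∃ a ∈ S1, ∃ b ∈ S2, x * a + y * b = m}
        ((x:ℤ) * (pz + s + y) + (y:ℤ) * q) :=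
      ⟨f + x * s, hfs, by push_cast; linear_combination hfz⟩
    obtain ⟨t, h1, h2⟩ := glue_rep hcop hy0 hmz
    rcases le_or_gt t 0 with ht | ht
    · exfalso
      apply hqn
      have hx2 : memZ S2 ((-t) * (x:ℤ)) :=
        memZ_smul hS2 (memZ_natCast hxS) (by omega)
      have := memZ_add hS2 h2 hx2
      rw [show (q + (x:ℤ) * t + (-t) * x) = q by ring] at this
      exact this
    · have hy2 : memZ S1 ((t - 1) * (y:ℤ)) :=
        memZ_smul hS1 (memZ_natCast hyS) (by omega)
      have := memZ_add hS1 h1 hy2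
      rw [show (pz + (s:ℤ) + y - y * t + (t - 1) * y) = pz + s by ring] at this
      exact this
  -- q has the pseudo-Frobenius property for S2
  have hqPF : ∀ s : ℕ, s ∈ S2 → s ≠ 0 → memZ S2 (q + s) := by
    intro s hs hs0
    have hys : y * s ∈ {m : ℕ | ∃ a ∈ S1, ∃ b ∈ S2, x * a + y * b = m} :=
      ⟨0, hS1.1, s, hs, by ring⟩
    have hfs := hf.2 _ hys (by positivity)
    have hmz : memZ {m : ℕ | ∃ a ∈ S1, ∃ b ∈ S2, x * a + y * b = m}
        ((x:ℤ) * (pz + y) + (y:ℤ) * (q + s)) :=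
      ⟨f + y * s, hfs, by push_cast; linear_combination hfz⟩
    obtain ⟨t, h1, h2⟩ := glue_rep hcop hy0 hmz
    rcases le_or_gt t 0 with ht | ht
    · have hx2 : memZ S2 ((-t) * (x:ℤ)) :=
        memZ_smul hS2 (memZ_natCast hxS) (by omega)
      have := memZ_add hS2 h2 hx2
      rw [show (q + (s:ℤ) + (x:ℤ) * t + (-t) * x) = q + s by ring] at this
      exact this
    · exfalso
      apply hpnm
      have hy2 : memZ S1 ((t - 1) * (y:ℤ)) :=
        memZ_smul hS1 (memZ_natCast hyS) (by omega)
      have := memZ_add hS1 h1 hy2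
      rw [show (pz + (y:ℤ) - y * t + (t - 1) * y) = pz by ring] at this
      exact this
  -- q ≥ -1
  have hqge : -1 ≤ q := by
    by_contra hlt
    push_neg at hlt
    obtain ⟨m2, ⟨hm2S, hm2n⟩, hm2le, _⟩ := exists_mult hS2
    obtain ⟨s, hsS, hse⟩ := hqPF m2 hm2S hm2n
    have hs0 : s = 0 := by
      by_contra h
      have := hm2le s hsS h
      omega
    have hqm : q = -(m2:ℤ) := by omega
    have hm2ge : 2 ≤ m2 := by omega
    have h1n : ¬ memZ S2 (1:ℤ) := by
      intro h
      obtain ⟨s1, hs1, he1⟩ := h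
      have : s1 = 1 := by omega
      have := hm2le s1 hs1 (by omega)
      omega
    have hq01 : 1 ≤ q0 := by
      by_contra h
      exact h1n (hq0m 1 (by omega))
    obtain ⟨sn, hsn, hsne⟩ := hq0m (q0 + m2) (by omega)
    have := hqPF sn hsn (by omega)
    rw [show (q + (sn:ℤ)) = q0 by omega] at this
    exact hq0n this
  -- pz ≥ 0
  have hpge : 0 ≤ pz := by
    by_contra hlt
    push_neg at hlt
    obtain ⟨m1, ⟨hm1S, hm1n⟩, hm1le, _⟩ := exists_mult hS1
    obtain ⟨s, hsS, hse⟩ := hpPF m1 hm1S hm1n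
    have hs0 : s = 0 := by
      by_contra h
      have := hm1le s hsS h
      omega
    have hpm : pz = -(m1:ℤ) := by omega
    have hFm : F1 + m1 ∈ S1 := hF1.2 _ (by omega)
    obtain ⟨s', hs'S, hs'e⟩ := hpPF (F1 + m1) hFm (by omega)
    have : s' = F1 := by omega
    exact hF1.1 (this ▸ hs'S)
  refine ⟨pz.toNat, q, ⟨?_, ?_⟩, hqn, hqPF, hstar, hqge, ?_⟩
  · intro h
    exact hpnm ⟨pz.toNat, h, by omega⟩
  · intro s hs hs0
    obtain ⟨w, hwS, hwe⟩ := hpPF s hs hs0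
    have : w = pz.toNat + s := by omega
    exact this ▸ hwS
  · rw [hfz]
    have : ((pz.toNat : ℕ) : ℤ) = pz := by omega
    rw [this]

lemma pf_glue {S1 S2 : Set ℕ} {x y : ℕ} (hS1 : IsNumSgp S1) (hS2 : IsNumSgp S2)
    (hcop : Nat.Coprime x y) (hx1 : 1 ≤ x) (hy1 : 1 ≤ y) (hxS : x ∈ S2) (hyS : y ∈ S1)
    {g1 : ℕ} (hg1 : g1 ∈ PF S1) {q : ℤ} (hqn : ¬ memZ S2 q)
    (hqPF : ∀ s ∈ S2, s ≠ 0 → memZ S2 (q + s))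
    (hqx : ∀ k : ℤ, 1 ≤ k → memZ S2 (q + x * k)) (hqge : -1 ≤ q) :
    ∃ G : ℕ, (G : ℤ) = x * g1 + y * q + x * y ∧
      G ∈ PF {m : ℕ | ∃ a ∈ S1, ∃ b ∈ S2, x * a + y * b = m} := by
  have hy0 : y ≠ 0 := by omega
  have hx' : (1:ℤ) ≤ x := by exact_mod_cast hx1
  have hy' : (1:ℤ) ≤ y := by exact_mod_cast hy1
  have hGnn : (0:ℤ) ≤ (x:ℤ) * g1 + y * q + x * y := by nlinarith
  refine ⟨((x:ℤ) * g1 + y * q + x * y).toNat, by omega, ?_, ?_⟩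
  · -- G ∉ T
    intro hG
    have hmz : memZ {m : ℕ | ∃ a ∈ S1, ∃ b ∈ S2, x * a + y * b = m}
        ((x:ℤ) * ((g1:ℤ) + y) + (y:ℤ) * q) :=
      ⟨_, hG, by rw [Int.toNat_of_nonneg hGnn]; push_cast; ring⟩
    obtain ⟨t, h1, h2⟩ := glue_rep hcop hy0 hmz
    rcases le_or_gt t 0 with ht | ht
    · apply hqn
      have hx2 : memZ S2 ((-t) * (x:ℤ)) :=
        memZ_smul hS2 (memZ_natCast hxS) (by omega)
      have := memZ_add hS2 h2 hx2
      rw [show (q + (x:ℤ) * t + (-t) * x) = q by ring] at this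
      exact this
    · apply hg1.1
      have hy2 : memZ S1 ((t - 1) * (y:ℤ)) :=
        memZ_smul hS1 (memZ_natCast hyS) (by omega)
      have := memZ_add hS1 h1 hy2
      rw [show ((g1:ℤ) + y - y * t + (t - 1) * y) = (g1:ℤ) by ring] at this
      exact natCast_memZ this
  · -- G + s ∈ T for nonzero s ∈ T
    rintro s ⟨a, ha, b, hb, hab⟩ hs0
    rcases Nat.eq_zero_or_pos a with ha0 | ha0
    · subst ha0
      have hb0 : b ≠ 0 := by
        rintro rfl
        simp at hab
        omega
      have h1 : memZ S1 ((g1:ℤ) + y) := memZ_natCast (hg1.2 y hyS hy0)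
      have h2 : memZ S2 (q + b) := hqPF b hb hb0
      obtain ⟨w, hw, hwe⟩ := glue_memZ (x := x) (y := y) h1 h2
      have heq : ((x:ℤ) * g1 + y * q + x * y).toNat + s = w := by
        rw [← hab]
        zify
        rw [Int.toNat_of_nonneg hGnn]
        push_cast
        linear_combination -hwe
      exact heq ▸ hw
    · have h1 : memZ S1 ((g1:ℤ) + a) := memZ_natCast (hg1.2 a ha (by omega))
      have h2 : memZ S2 (q + x + b) := by
        rcases Nat.eq_zero_or_pos b with hb0 | hb0
        · subst hb0; simpa using hqx 1 le_rfl
        · obtain ⟨w, hw, hwe⟩ := hqPF b hb (by omega)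
          have hxw : x + w ∈ S2 := hS2.2.1 x hxS w hw
          exact ⟨x + w, hxw, by push_cast; omega⟩
      obtain ⟨w, hw, hwe⟩ := glue_memZ (x := x) (y := y) h1 h2
      have heq : ((x:ℤ) * g1 + y * q + x * y).toNat + s = w := by
        rw [← hab]
        zify
        rw [Int.toNat_of_nonneg hGnn]
        push_cast
        linear_combination -hwe
      exact heq ▸ hw

lemma nat_mul_mem {S : Set ℕ} (hS : IsNumSgp S) {a : ℕ} (ha : a ∈ S) (k : ℕ) : k * a ∈ S := by
  induction k with
  | zero => simpa using hS.1
  | succ n ih =>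
    have := hS.2.1 _ ih _ ha
    rwa [show (n + 1) * a = n * a + a by ring]

lemma min_gen_aux {S2 : Set ℕ} (hS2 : IsNumSgp S2) {x m2 : ℕ} (hx1 : 1 ≤ x)
    (hxS : x ∈ S2) (hxg : ¬ IsMinGen S2 x) (hm2 : IsMinGen S2 m2) :
    ∀ b ∈ S2, ∀ c : ℕ, b + c * x = m2 → b = m2 ∧ c = 0 := by
  intro b hb c hbc
  rcases Nat.eq_zero_or_pos c with rfl | hc
  · constructor <;> omega
  · exfalso
    rcases Nat.eq_zero_or_pos b with rfl | hb0
    · rcases eq_or_lt_of_le (show 1 ≤ c from hc) with hc1 | hc2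
      · have hxm : x = m2 := by rw [← hc1] at hbc; omega
        exact hxg (hxm ▸ hm2)
      · have hcx : (c - 1) * x = c * x - x := by rw [Nat.sub_one_mul]
        have hge : x ≤ c * x := Nat.le_mul_of_pos_left x hc
        refine hm2.2.2 ⟨x, hxS, (c - 1) * x, nat_mul_mem hS2 hxS _, by omega, ?_, by omega⟩
        have : 0 < (c - 1) * x := Nat.mul_pos (by omega) (by omega)
        omega
    · exact hm2.2.2 ⟨b, hb, c * x, nat_mul_mem hS2 hxS c, by omega,
        by have : 0 < c * x := Nat.mul_pos hc (by omega); omega, hbc⟩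

lemma key {S1 S2 : Set ℕ} (hS1 : IsNumSgp S1) (hS2 : IsNumSgp S2)
    (hns1 : ¬ IsSym S1)
    {x y : ℕ} (hx : x ∈ S2) (hxg : ¬ IsMinGen S2 x)
    (hy : y ∈ S1) (hyg : ¬ IsMinGen S1 y)
    (hcop : Nat.Coprime x y) :
    ¬ NearlyGGen {m : ℕ | ∃ a ∈ S1, ∃ b ∈ S2, x * a + y * b = m} := by
  -- x, y ≥ 2
  have hy1' : y ≠ 1 := by
    rintro rfl
    exact hyg ⟨hy, one_ne_zero, by rintro ⟨a, _, b, _, ha, hb, hab⟩; omega⟩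
  have hx1' : x ≠ 1 := by
    rintro rfl
    exact hxg ⟨hx, one_ne_zero, by rintro ⟨a, _, b, _, ha, hb, hab⟩; omega⟩
  have hx0 : x ≠ 0 := by
    rintro rfl
    exact hy1' (Nat.coprime_zero_left y |>.mp hcop)
  have hy0 : y ≠ 0 := by
    rintro rfl
    exact hx1' (Nat.coprime_zero_right x |>.mp hcop)
  have hx1 : 1 ≤ x := by omega
  have hy1 : 1 ≤ y := by omega
  obtain ⟨F1, hF1, f1, hf1PF, hf1ne⟩ := not_sym hns1
  obtain ⟨m2, ⟨hm2S, hm2n⟩, hm2le, hm2gen⟩ := exists_mult hS2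
  have haux := min_gen_aux hS2 hx1 hx hxg hm2gen
  have hco : IsCoprime ((y:ℤ)) ((x:ℤ)) := by
    rw [Int.isCoprime_iff_gcd_eq_one]
    simpa [Nat.gcd_comm] using hcop
  -- y * m2 is a minimal generator of the gluing
  have hym2 : IsMinGen {m : ℕ | ∃ a ∈ S1, ∃ b ∈ S2, x * a + y * b = m} (y * m2) := by
    refine ⟨⟨0, hS1.1, m2, hm2S, by ring⟩, by positivity, ?_⟩
    rintro ⟨s1, ⟨a1, ha1, b1, hb1, he1⟩, s2, ⟨a2, ha2, b2, hb2, he2⟩, hs10, hs20, hsum⟩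
    have hdvd : (y:ℤ) ∣ ((a1:ℤ) + a2) := by
      have h1 : (y:ℤ) ∣ ((a1:ℤ) + a2) * x := by
        refine ⟨(m2:ℤ) - b1 - b2, ?_⟩
        have : ((x * a1 + y * b1 : ℕ) : ℤ) + ((x * a2 + y * b2 : ℕ) : ℤ) = ((y * m2 : ℕ) : ℤ) := by
          rw [he1, he2]; exact_mod_cast congrArg (Nat.cast : ℕ → ℤ) hsum
        push_cast at this
        linarith
      exact hco.dvd_of_dvd_mul_left (by rwa [mul_comm ((a1:ℤ) + a2) (x:ℤ)] at h1)
    obtain ⟨c, hc⟩ := hdvd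
    have hc0 : 0 ≤ c := by nlinarith [Int.natCast_nonneg a1, Int.natCast_nonneg a2]
    lift c to ℕ using hc0
    have hmain : (b1 + b2) + c * x = m2 := by
      have h2 : ((x * a1 + y * b1 : ℕ) : ℤ) + ((x * a2 + y * b2 : ℕ) : ℤ) = ((y * m2 : ℕ) : ℤ) := by
        rw [he1, he2]; exact_mod_cast congrArg (Nat.cast : ℕ → ℤ) hsum
      push_cast at h2 hc ⊢
      have hy' : (0:ℤ) < y := by exact_mod_cast hy1
      nlinarith [h2, hc]
    obtain ⟨hb12, hcz⟩ := haux (b1 + b2) (hS2.2.1 _ hb1 _ hb2) c hmain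
    have ha12 : a1 = 0 ∧ a2 = 0 := by
      have : (a1:ℤ) + a2 = 0 := by rw [hc, hcz]; simp
      constructor <;> omega
    obtain ⟨ha1z, ha2z⟩ := ha12
    subst ha1z
    subst ha2z
    have hb10 : b1 ≠ 0 := by
      rintro rfl
      simp at he1
      exact hs10 (by exact_mod_cast he1.symm)
    have hb20 : b2 ≠ 0 := by
      rintro rfl
      simp at he2
      exact hs20 (by exact_mod_cast he2.symm)
    exact hm2gen.2.2 ⟨b1, hb1, b2, hb2, hb10, hb20, by omega⟩
  intro hNG
  obtain ⟨f, hfPF, hfc⟩ := hNG (y * m2) hym2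
  obtain ⟨p, q, hpPF, hqn, hqPF, hqx, hqge, hfz⟩ :=
    decomp hS1 hS2 hcop hx1 hy1 hx hy hF1 hfPF
  have hstep : ∀ g1 : ℕ, g1 ∈ PF S1 → memZ S1 ((p:ℤ) - g1) := by
    intro g1 hg1
    obtain ⟨G, hGe, hGPF⟩ := pf_glue hS1 hS2 hcop hx1 hy1 hx hy hg1 hqn hqPF hqx hqge
    have hmem := hfc G hGPF
    have hmz : memZ {m : ℕ | ∃ a ∈ S1, ∃ b ∈ S2, x * a + y * b = m}
        ((x:ℤ) * ((p:ℤ) - g1) + (y:ℤ) * (m2:ℤ)) := by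
      rw [show (x:ℤ) * ((p:ℤ) - g1) + (y:ℤ) * (m2:ℤ) =
          ((y * m2 : ℕ) : ℤ) + (f:ℤ) - (G:ℤ) by push_cast; linear_combination hGe - hfz]
      exact hmem
    obtain ⟨t, h1, h2⟩ := glue_rep hcop hy0 hmz
    have ht0 : 0 ≤ t := by
      by_contra ht
      push_neg at ht
      obtain ⟨b, hbS, hbe⟩ := h2
      have hxt : ((-t).toNat * x : ℕ) ∈ S2 := nat_mul_mem hS2 hx _
      have hbm : b + (-t).toNat * x = m2 := by
        have htn : (((-t).toNat : ℕ) : ℤ) = -t := by omega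
        have : (((-t).toNat * x : ℕ) : ℤ) = (-t) * x := by push_cast; rw [htn]
        have h3 : (b:ℤ) + (((-t).toNat * x : ℕ) : ℤ) = m2 := by
          rw [this]; linarith [hbe]
        exact_mod_cast h3
      obtain ⟨_, hc0⟩ := haux b hbS _ hbm
      omega
    have hyt : memZ S1 (t * (y:ℤ)) := memZ_smul hS1 (memZ_natCast hy) ht0
    have := memZ_add hS1 h1 hyt
    rwa [show ((p:ℤ) - g1 - y * t + t * y) = (p:ℤ) - g1 by ring] at this
  -- first: p = F1
  obtain ⟨s, hsS, hse⟩ := hstep F1 (frob_mem_PF hF1)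
  have hpF : p = F1 := by
    rcases Nat.eq_zero_or_pos s with rfl | hs0
    · omega
    · exfalso
      exact hpPF.1 (hF1.2 p (by omega))
  -- second: contradiction with f1
  obtain ⟨s', hs'S, hs'e⟩ := hstep f1 hf1PF
  have hs'0 : s' ≠ 0 := by
    rintro rfl
    apply hf1ne
    omega
  have := hf1PF.2 s' hs'S hs'0
  have hFeq : f1 + s' = F1 := by omega
  exact hF1.1 (hFeq ▸ this)


theorem stmt12 (S1 S2 : Set ℕ) (hS1 : IsNumSgp S1) (hS2 : IsNumSgp S2)
    (hns : ¬ IsSym S1 ∨ ¬ IsSym S2)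
    (x y : ℕ) (hx : x ∈ S2) (hxg : ¬ IsMinGen S2 x)
    (hy : y ∈ S1) (hyg : ¬ IsMinGen S1 y)
    (hcop : Nat.Coprime x y) :
    ¬ NearlyGGen {m : ℕ | ∃ a ∈ S1, ∃ b ∈ S2, x * a + y * b = m} := by
  rcases hns with hns1 | hns2
  · exact key hS1 hS2 hns1 hx hxg hy hyg hcop
  · have hset : {m : ℕ | ∃ a ∈ S1, ∃ b ∈ S2, x * a + y * b = m} =
        {m : ℕ | ∃ a ∈ S2, ∃ b ∈ S1, y * a + x * b = m} := by
      ext m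
      constructor
      · rintro ⟨a, ha, b, hb, hab⟩
        exact ⟨b, hb, a, ha, by omega⟩
      · rintro ⟨a, ha, b, hb, hab⟩
        exact ⟨b, hb, a, ha, by omega⟩
    rw [hset]
    exact key hS2 hS1 hns2 hy hyg hx hxg (Nat.Coprime.symm hcop)
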